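/- Let a > 0, Δt > 0, and z ≥ 0 be real numbers. Then every complex root ξ of the quadratic (1 + aΔt)ξ² + (Δt²z − 2 − aΔt)ξ + 1 = 0 satisfies |ξ| ≤ 1 if and only if Δt²z ≤ 2(2 + aΔt). In particular, for z > 0 this holds if and only if Δt ≤ √(4/z + (a/z)²) + a/z. -/

import Mathlib

set_option maxHeartbeats 1000000


/-- CFL condition for the fully explicit first-order-in-time (forward difference)
accelerated scheme: all roots of
`(1 + aΔt)ξ² + (Δt²z − 2 − aΔt)ξ + 1 = 0` have modulus at most 1 iff
`Δt²z ≤ 2(2 + aΔt)`; for `z > 0` this is equivalent to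
`Δt ≤ √(4/z + (a/z)²) + a/z`. -/
theorem forward_scheme_CFL (a Δt z : ℝ) (ha : 0 < a) (hΔt : 0 < Δt) (hz : 0 ≤ z) :
    ((∀ ξ : ℂ, ((1 + a * Δt : ℝ) : ℂ) * ξ ^ 2 + ((Δt ^ 2 * z - 2 - a * Δt : ℝ) : ℂ) * ξ +
        1 = 0 → ‖ξ‖ ≤ 1) ↔ Δt ^ 2 * z ≤ 2 * (2 + a * Δt)) ∧
      (0 < z → (Δt ^ 2 * z ≤ 2 * (2 + a * Δt) ↔
        Δt ≤ Real.sqrt (4 / z + (a / z) ^ 2) + a / z)) := by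
  have haΔ : 0 < a * Δt := mul_pos ha hΔt
  set A : ℝ := 1 + a * Δt with hAdef
  set B : ℝ := Δt ^ 2 * z - 2 - a * Δt with hBdef
  have hA : (0:ℝ) < A := by positivity
  have hA1 : (1:ℝ) ≤ A := by simp only [hAdef]; nlinarith
  have hAne : A ≠ 0 := hA.ne'
  have hAcne : (A : ℂ) ≠ 0 := Complex.ofReal_ne_zero.2 hAne
  constructor
  · constructor
    · -- stability of all roots implies CFL
      intro hroots
      by_contra hcond
      push_neg at hcond
      have hB : A + 1 < B := by simp only [hAdef, hBdef]; nlinarith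
      have hD : 0 < B ^ 2 - 4 * A := by
        nlinarith [mul_pos (show (0:ℝ) < B - (A+1) by linarith)
          (show (0:ℝ) < B + (A+1) by linarith), sq_nonneg (A - 1)]
      set s : ℝ := Real.sqrt (B ^ 2 - 4 * A) with hsdef
      have hs0 : 0 < s := Real.sqrt_pos.2 hD
      have hs : s ^ 2 = B ^ 2 - 4 * A := Real.sq_sqrt hD.le
      set r : ℝ := (-B - s) / (2 * A) with hrdef
      have h4 : 2 * A * r = -B - s := by rw [hrdef]; field_simp
      have h0 : (4 * A) * (A * r ^ 2 + B * r + 1) = 0 := by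
        linear_combination (2 * A * r + B - s) * h4 + hs
      have hroot_r : A * r ^ 2 + B * r + 1 = 0 := by
        rcases mul_eq_zero.1 h0 with h | h
        · exact absurd h (by positivity)
        · exact h
      have hroot : (A : ℂ) * (r : ℂ) ^ 2 + (B : ℂ) * (r : ℂ) + 1 = 0 := by
        exact_mod_cast hroot_r
      have habs : ‖(r : ℂ)‖ ≤ 1 := hroots r hroot
      rw [Complex.norm_real, Real.norm_eq_abs] at habs
      have hr : r < -1 := by
        rw [hrdef, div_lt_iff₀ (by positivity)]
        have h2AB : 2 * A - B < s := by
          rcases le_or_gt (2 * A - B) 0 with h | h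
          · linarith
          · have hlt : (2 * A - B) ^ 2 < B ^ 2 - 4 * A := by
              nlinarith [mul_pos hA (show (0:ℝ) < B - A - 1 by linarith)]
            have h2 := Real.sqrt_lt_sqrt (sq_nonneg (2 * A - B)) hlt
            rwa [Real.sqrt_sq h.le] at h2
        linarith
      linarith [(abs_le.1 habs).1]
    · -- CFL implies all roots stable
      intro hcond ξ hξ
      have hP1 : 0 ≤ A + B + 1 := by simp only [hAdef, hBdef]; nlinarith
      have hPm1 : 0 ≤ A - B + 1 := by simp only [hAdef, hBdef]; linarith
      set D : ℝ := B ^ 2 - 4 * A with hDdef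
      rcases le_or_gt 0 D with hD | hD
      · -- real roots
        set s : ℝ := Real.sqrt D with hsdef
        have hs0 : 0 ≤ s := Real.sqrt_nonneg _
        have hs : s ^ 2 = D := Real.sq_sqrt hD
        set rp : ℝ := (-B + s) / (2 * A) with hrpdef
        set rm : ℝ := (-B - s) / (2 * A) with hrmdef
        have hp4 : 2 * A * rp = -B + s := by rw [hrpdef]; field_simp
        have hm4 : 2 * A * rm = -B - s := by rw [hrmdef]; field_simp
        have e1 : A * (rp + rm) = -B := by linear_combination hp4 / 2 + hm4 / 2
        have hs' : s ^ 2 = B ^ 2 - 4 * A := hs.trans hDdef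
        have e2 : A * (rp * rm) = 1 := by
          have hprod : (2 * A * rp) * (2 * A * rm) = (-B + s) * (-B - s) := by
            rw [hp4, hm4]
          have h0 : (4 * A) * (A * (rp * rm)) = (4 * A) * 1 := by
            linear_combination hprod - hs'
          exact mul_left_cancel₀ (by positivity) h0
        have e1c : (A : ℂ) * ((rp : ℂ) + (rm : ℂ)) = -(B : ℂ) := by exact_mod_cast e1
        have e2c : (A : ℂ) * ((rp : ℂ) * (rm : ℂ)) = 1 := by exact_mod_cast e2
        have key : (A : ℂ) * ((ξ - rp) * (ξ - rm)) = 0 := by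
          linear_combination hξ - ξ * e1c + e2c
        have key2 : (ξ - rp) * (ξ - rm) = 0 := by
          rcases mul_eq_zero.1 key with h | h
          · exact absurd h hAcne
          · exact h
        -- bounds on real roots
        have hBD : D = B ^ 2 - 4 * A := hDdef
        have h2AB1 : 0 ≤ 2 * A + B := by linarith
        have h2AB2 : 0 ≤ 2 * A - B := by linarith
        have hsle1 : s ≤ 2 * A + B := by
          have hle : D ≤ (2 * A + B) ^ 2 := by nlinarith [mul_nonneg hA.le hP1]
          have := Real.sqrt_le_sqrt hle
          rwa [Real.sqrt_sq h2AB1] at this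
        have hsle2 : s ≤ 2 * A - B := by
          have hle : D ≤ (2 * A - B) ^ 2 := by nlinarith [mul_nonneg hA.le hPm1]
          have := Real.sqrt_le_sqrt hle
          rwa [Real.sqrt_sq h2AB2] at this
        have hrp1 : rp ≤ 1 := by rw [hrpdef, div_le_one (by positivity)]; linarith
        have hrp2 : -1 ≤ rp := by rw [hrpdef, le_div_iff₀ (by positivity)]; linarith
        have hrm1 : rm ≤ 1 := by rw [hrmdef, div_le_one (by positivity)]; linarith
        have hrm2 : -1 ≤ rm := by rw [hrmdef, le_div_iff₀ (by positivity)]; linarith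
        rcases mul_eq_zero.1 key2 with h | h
        · rw [sub_eq_zero.1 h, Complex.norm_real, Real.norm_eq_abs, abs_le]
          exact ⟨hrp2, hrp1⟩
        · rw [sub_eq_zero.1 h, Complex.norm_real, Real.norm_eq_abs, abs_le]
          exact ⟨hrm2, hrm1⟩
      · -- complex conjugate roots
        set t : ℝ := Real.sqrt (-D) with htdef
        have ht0 : 0 ≤ t := Real.sqrt_nonneg _
        have ht : t ^ 2 = 4 * A - B ^ 2 := by
          rw [htdef, Real.sq_sqrt (by linarith : (0:ℝ) ≤ -D)]
          simp only [hDdef]; ring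
        set p : ℝ := -B / (2 * A) with hpdef
        set q : ℝ := t / (2 * A) with hqdef
        have hp2 : 2 * A * p = -B := by rw [hpdef]; field_simp
        have hq2 : 2 * A * q = t := by rw [hqdef]; field_simp
        have e2 : A * (p ^ 2 + q ^ 2) = 1 := by
          have hprodp : (2 * A * p) * (2 * A * p) = (-B) * (-B) := by rw [hp2]
          have hprodq : (2 * A * q) * (2 * A * q) = t * t := by rw [hq2]
          have h0 : (4 * A) * (A * (p ^ 2 + q ^ 2)) = (4 * A) * 1 := by
            linear_combination hprodp + hprodq + ht
          exact mul_left_cancel₀ (by positivity) h0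
        have e1c : 2 * (A : ℂ) * (p : ℂ) = -(B : ℂ) := by exact_mod_cast hp2
        have e2c : (A : ℂ) * ((p : ℂ) ^ 2 + (q : ℂ) ^ 2) = 1 := by exact_mod_cast e2
        have key : (A : ℂ) * ((ξ - ((p : ℂ) + (q : ℂ) * Complex.I)) *
            (ξ - ((p : ℂ) - (q : ℂ) * Complex.I))) = 0 := by
          linear_combination hξ - ξ * e1c + e2c - (A : ℂ) * (q : ℂ) ^ 2 * Complex.I_sq
        have hpq : p ^ 2 + q ^ 2 ≤ 1 := by
          nlinarith [mul_nonneg (sub_nonneg.2 hA1) (add_nonneg (sq_nonneg p) (sq_nonneg q))]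
        have key2 : (ξ - ((p : ℂ) + (q : ℂ) * Complex.I)) *
            (ξ - ((p : ℂ) - (q : ℂ) * Complex.I)) = 0 := by
          rcases mul_eq_zero.1 key with h | h
          · exact absurd h hAcne
          · exact h
        rcases mul_eq_zero.1 key2 with h | h
        · have hξ' : ξ = (p : ℂ) + (q : ℂ) * Complex.I := sub_eq_zero.1 h
          have h1 : ‖ξ‖ ^ 2 = p ^ 2 + q ^ 2 := by
            rw [hξ', Complex.sq_norm, Complex.normSq_add_mul_I]
          nlinarith [norm_nonneg ξ]
        · have hξ' : ξ = ((p : ℝ) : ℂ) + ((-q : ℝ) : ℂ) * Complex.I := by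
            rw [sub_eq_zero.1 h]; push_cast; ring
          have h1 : ‖ξ‖ ^ 2 = p ^ 2 + (-q) ^ 2 := by
            rw [hξ', Complex.sq_norm, Complex.normSq_add_mul_I]
          nlinarith [norm_nonneg ξ]
  · -- part 2
    intro hz'
    set c : ℝ := a / z with hcdef
    set R : ℝ := Real.sqrt (4 / z + c ^ 2) with hRdef
    have hc0 : 0 < c := div_pos ha hz'
    have h4z : 0 < 4 / z := by positivity
    have hR0 : 0 ≤ R := Real.sqrt_nonneg _
    have hR2 : R ^ 2 = 4 / z + c ^ 2 := Real.sq_sqrt (by positivity)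
    have hzc : z * c = a := by rw [hcdef]; field_simp
    have hz4 : z * (4 / z) = 4 := by field_simp
    have hzcΔ : z * c * Δt = a * Δt := by rw [hzc]
    have hcR : c ≤ R := by nlinarith
    constructor
    · intro h
      by_contra hlt
      push_neg at hlt
      have h1 : R < Δt - c := by linarith
      have h2 : R ^ 2 < (Δt - c) ^ 2 := by nlinarith
      have h3 := mul_lt_mul_of_pos_left h2 hz'
      rw [hR2] at h3
      nlinarith [h3, hzcΔ, hz4, h]
    · intro h
      have h1 : Δt - c ≤ R := by linarith
      have h2 : -R ≤ Δt - c := by linarith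
      have h3 : (Δt - c) ^ 2 ≤ R ^ 2 := by nlinarith
      have h4 := mul_le_mul_of_nonneg_left h3 hz'.le
      rw [hR2] at h4
      nlinarith [h4, hzcΔ, hz4]
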